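/- Let T₀ ∈ ℂ with Re(T₀) < 1/2. Then for each τ ≥ 0 and each s ∈ ℂ with Re(s) ≥ 0, writing w = 1 - e^{-sτ}, if |1 - T₀·w| = 0 then necessarily Re(1/(w)) ≤ 1/2; consequently 1 - T₀(1 - e^{-sτ}) ≠ 0 for all s with Re(s) > 0. -/

import Mathlib

open Complex

/-- If `Re(T₀) < 1/2`, `τ > 0` and `Re(s) > 0`, then `1 - T₀(1 - e^{-sτ}) ≠ 0`. -/
theorem stmt11 (T₀ : ℂ) (hT₀ : T₀.re < 1 / 2) (τ : ℝ) (hτ : 0 < τ)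
    (s : ℂ) (hs : 0 < s.re) :
    1 - T₀ * (1 - Complex.exp (-(s * τ))) ≠ 0 := by
  set z : ℂ := Complex.exp (-(s * τ)) with hz
  have habs : ‖z‖ < 1 := by
    rw [hz, Complex.norm_exp]
    have : (-(s * τ)).re = -(s.re * τ) := by simp [Complex.mul_re]
    rw [this]
    have : -(s.re * τ) < 0 := by nlinarith
    calc Real.exp (-(s.re * τ)) < Real.exp 0 := Real.exp_lt_exp.mpr this
      _ = 1 := Real.exp_zero
  have hnormsq : Complex.normSq z < 1 := by
    have := Complex.sq_norm z
    nlinarith [norm_nonneg z]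
  intro h
  have heq : T₀ * (1 - z) = 1 := by linear_combination -h
  have hne : (1 : ℂ) - z ≠ 0 := by
    intro h0
    rw [h0, mul_zero] at heq
    exact one_ne_zero heq.symm
  have hT : T₀ = (1 - z)⁻¹ := by
    field_simp at heq ⊢
    linear_combination heq
  have hre : T₀.re = (1 - z.re) / Complex.normSq (1 - z) := by
    rw [hT, Complex.inv_re]
    congr 1
  have hnsq : Complex.normSq (1 - z) = 1 - 2 * z.re + Complex.normSq z := by
    simp [Complex.normSq_sub, Complex.normSq_one, Complex.mul_re]; ring
  have hpos : 0 < Complex.normSq (1 - z) := Complex.normSq_pos.mpr hne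
  rw [hre] at hT₀
  rw [div_lt_iff₀ hpos] at hT₀
  nlinarith
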